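/- The formal power series B̄(X) = Σ b_n X^n ∈ ℂ[[X]], where (b_n) is the Baum–Sweet sequence, is not a rational function, i.e., there are no polynomials f, g ∈ ℂ[X] with g ≠ 0 and g·B̄ = f. -/

import Mathlib

open Finset


/-- The generating series `B̄ = Σ b_n X^n ∈ ℂ[[X]]` of the Baum–Sweet sequence is not a
rational function: there are no polynomials `f, g ∈ ℂ[X]` with `g ≠ 0` and `g·B̄ = f`. -/
theorem baumSweet_series_not_rational
    (b : ℕ → ℕ) (h0 : b 0 = 1)
    (h1 : ∀ n, b (2 * n + 1) = b n)
    (h2 : ∀ n, b (4 * n) = b n)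
    (h3 : ∀ n, b (4 * n + 2) = 0) :
    ¬ ∃ (f g : Polynomial ℂ), g ≠ 0 ∧
      (g : PowerSeries ℂ) * PowerSeries.mk (fun n => (b n : ℂ)) = (f : PowerSeries ℂ) := by
  rintro ⟨f, g, hg, hfg⟩
  -- b is {0,1}-valued
  have hble : ∀ n, b n < 2 := by
    intro n
    induction n using Nat.strong_induction_on with
    | _ n ih =>
      rcases Nat.even_or_odd n with ⟨m, hm⟩ | ⟨m, hm⟩
      · rcases Nat.even_or_odd m with ⟨r, hr⟩ | ⟨r, hr⟩
        · by_cases h : n = 0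
          · rw [h, h0]; omega
          · have hn : n = 4 * r := by omega
            rw [hn, h2]
            exact ih r (by omega)
        · have hn : n = 4 * r + 2 := by omega
          rw [hn, h3]; omega
      · have hn : n = 2 * m + 1 := by omega
        rw [hn, h1]
        exact ih m (by omega)
  -- ones at powers of 4
  have hone : ∀ k, b (4 ^ k) = 1 := by
    intro k
    induction k with
    | zero =>
      have := h1 0
      simpa [h0] using this
    | succ k ih =>
      have : (4:ℕ) ^ (k+1) = 4 * 4 ^ k := by ring
      rw [this, h2, ih]
  -- explicit small zeros
  have b2 : b 2 = 0 := by simpa using h3 0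
  have b5 : b 5 = 0 := by have := h1 2; simpa [b2] using this
  have b10 : b 10 = 0 := by simpa using h3 2
  have b11 : b 11 = 0 := by have := h1 5; simpa [b5] using this
  have b20 : b 20 = 0 := by have := h2 5; simpa [b5] using this
  have b21 : b 21 = 0 := by have := h1 10; simpa [b10] using this
  have b22 : b 22 = 0 := by simpa using h3 5
  have b23 : b 23 = 0 := by have := h1 11; simpa [b11] using this
  have b40 : b 40 = 0 := by have := h2 10; simpa [b10] using this
  have b41 : b 41 = 0 := by have := h1 20; simpa [b20] using this
  have b42 : b 42 = 0 := by simpa using h3 10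
  have b43 : b 43 = 0 := by have := h1 21; simpa [b21] using this
  have b44 : b 44 = 0 := by have := h2 11; simpa [b11] using this
  have b45 : b 45 = 0 := by have := h1 22; simpa [b22] using this
  have b46 : b 46 = 0 := by simpa using h3 11
  have b47 : b 47 = 0 := by have := h1 23; simpa [b23] using this
  -- long zero runs: b = 0 on [5·2^(j+2), 6·2^(j+2))
  have hzpair : ∀ j : ℕ,
      (∀ n, 5 * 2 ^ (j+2) ≤ n → n < 6 * 2 ^ (j+2) → b n = 0) ∧
      (∀ n, 5 * 2 ^ (j+3) ≤ n → n < 6 * 2 ^ (j+3) → b n = 0) := by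
    intro j
    induction j with
    | zero =>
      constructor
      · intro n hn1 hn2
        norm_num at hn1 hn2
        interval_cases n
        · exact b20
        · exact b21
        · exact b22
        · exact b23
      · intro n hn1 hn2
        norm_num at hn1 hn2
        interval_cases n
        · exact b40
        · exact b41
        · exact b42
        · exact b43
        · exact b44
        · exact b45
        · exact b46
        · exact b47
    | succ j ih =>
      obtain ⟨Pj, Pj1⟩ := ih
      refine ⟨Pj1, ?_⟩
      intro n hn1 hn2
      have hpow : (2:ℕ) ^ (j+1+3) = 2 * 2 ^ (j+3) := by ring
      have hpow2 : (2:ℕ) ^ (j+3) = 2 * 2 ^ (j+2) := by ring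
      rcases Nat.even_or_odd n with ⟨m, hm⟩ | ⟨m, hm⟩
      · -- n even
        rcases Nat.even_or_odd m with ⟨r, hr⟩ | ⟨r, hr⟩
        · -- n = 4r
          have hn : n = 4 * r := by omega
          rw [hn, h2]
          apply Pj <;> omega
        · -- n = 4*((m-1)/2) + 2
          have hn : n = 4 * r + 2 := by omega
          rw [hn, h3]
      · -- n odd: n = 2m+1
        have hn : n = 2 * m + 1 := by omega
        rw [hn, h1]
        apply Pj1 <;> omega
  have hz : ∀ j : ℕ, ∀ n, 5 * 2 ^ (j+2) ≤ n → n < 6 * 2 ^ (j+2) → b n = 0 :=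
    fun j => (hzpair j).1
  -- minimal nonzero coefficient of g
  have hgex : ∃ v, g.coeff v ≠ 0 := by
    by_contra h
    push_neg at h
    exact hg (Polynomial.ext fun n => by simp [h n])
  set v := Nat.find hgex with hvdef
  have hv : g.coeff v ≠ 0 := Nat.find_spec hgex
  have hvmin : ∀ i, i < v → g.coeff i = 0 := by
    intro i hi
    have := Nat.find_min hgex hi
    simpa using this
  have hvle : v ≤ g.natDegree := Polynomial.le_natDegree_of_ne_zero hv
  set d := g.natDegree - v with hddef
  have hvd : g.natDegree = v + d := by omega
  -- the linear recurrence
  have hE : ∀ n, f.natDegree < n →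
      ∑ j ∈ range (d+1), g.coeff (v+j) * (b (n + d - j) : ℂ) = 0 := by
    intro n hn
    set m := n + v + d with hmdef
    have hm : f.natDegree < m := by omega
    have hc : ∑ k ∈ range (m+1), g.coeff k * (b (m - k) : ℂ) = 0 := by
      have hc := congrArg (PowerSeries.coeff (R := ℂ) m) hfg
      rw [PowerSeries.coeff_mul, Polynomial.coeff_coe,
        Polynomial.coeff_eq_zero_of_natDegree_lt hm] at hc
      rw [Finset.Nat.sum_antidiagonal_eq_sum_range_succ_mk] at hc
      simpa [Polynomial.coeff_coe] using hc
    have hsub : Finset.Ico v (v+d+1) ⊆ Finset.range (m+1) := by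
      intro k hk
      simp only [Finset.mem_Ico] at hk
      simp only [Finset.mem_range]
      omega
    have hrestrict : ∑ k ∈ range (m+1), g.coeff k * (b (m - k) : ℂ)
        = ∑ k ∈ Finset.Ico v (v+d+1), g.coeff k * (b (m - k) : ℂ) := by
      refine (Finset.sum_subset hsub ?_).symm
      intro k _ hk
      simp only [Finset.mem_Ico, not_and, not_lt] at hk
      rcases lt_or_ge k v with h' | h'
      · rw [hvmin k h', zero_mul]
      · have : g.natDegree < k := by have := hk h'; omega
        rw [Polynomial.coeff_eq_zero_of_natDegree_lt this, zero_mul]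
    rw [hrestrict, Finset.sum_Ico_eq_sum_range] at hc
    have hrange : v + d + 1 - v = d + 1 := by omega
    rw [hrange] at hc
    rw [← hc]
    apply Finset.sum_congr rfl
    intro j hj
    simp only [Finset.mem_range] at hj
    have : m - (v + j) = n + d - j := by omega
    rw [this]
  -- pigeonhole
  set N0 := f.natDegree + 1 with hN0
  set φ : ℕ → (Fin d → Fin 2) := fun n i => ⟨b (n + i), hble _⟩ with hφ
  have hpig : ∃ n1 ∈ Finset.Ico N0 (N0 + 2^d + 1), ∃ n2 ∈ Finset.Ico N0 (N0 + 2^d + 1),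
      n1 ≠ n2 ∧ φ n1 = φ n2 := by
    apply Finset.exists_ne_map_eq_of_card_lt_of_maps_to
    · have hcard1 : (Finset.univ : Finset (Fin d → Fin 2)).card = 2 ^ d := by
        simp [Fintype.card_fun]
      have hcard2 : (Finset.Ico N0 (N0 + 2^d + 1)).card = 2 ^ d + 1 := by
        rw [Nat.card_Ico]; omega
      rw [hcard1, hcard2]
      omega
    · intro a _
      exact Finset.mem_univ _
  obtain ⟨a1, ha1, a2, ha2, hne, hfeq⟩ := hpig
  simp only [Finset.mem_Ico] at ha1 ha2
  -- normalize so n1 < n2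
  obtain ⟨n1, n2, hn1N, hlt, heq⟩ :
      ∃ n1 n2, N0 ≤ n1 ∧ n1 < n2 ∧ φ n1 = φ n2 := by
    rcases hne.lt_or_gt with h | h
    · exact ⟨a1, a2, ha1.1, h, hfeq⟩
    · exact ⟨a2, a1, ha2.1, h, hfeq.symm⟩
  set p := n2 - n1 with hpdef
  have hp : 1 ≤ p := by omega
  have hinit : ∀ i, i < d → b (n1 + i) = b (n1 + i + p) := by
    intro i hi
    have := congrFun heq ⟨i, hi⟩
    have h' : b (n1 + i) = b (n2 + i) := by
      simpa [φ, Fin.ext_iff] using this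
    rw [h']
    congr 1
    omega
  -- one-step of the recurrence comparison
  have hstep : ∀ n, f.natDegree < n →
      (∀ i, 1 ≤ i → i ≤ d → b (n + d - i) = b (n + p + d - i)) →
      b (n + d) = b (n + p + d) := by
    intro n hn htail
    have e1 := hE n hn
    have e2 := hE (n + p) (by omega)
    have hdiff : ∑ j ∈ range (d+1),
        g.coeff (v+j) * ((b (n + d - j) : ℂ) - (b (n + p + d - j) : ℂ)) = 0 := by
      simp only [mul_sub]
      rw [Finset.sum_sub_distrib, e1, e2, sub_zero]
    rw [Finset.sum_eq_single 0] at hdiff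
    · simp only [Nat.sub_zero, add_zero] at hdiff
      have := mul_eq_zero.mp hdiff
      rcases this with h' | h'
      · exact absurd h' hv
      · have : (b (n + d) : ℂ) = (b (n + p + d) : ℂ) := by
          linear_combination h'
        exact_mod_cast this
    · intro j hj hj0
      simp only [Finset.mem_range] at hj
      have : b (n + d - j) = b (n + p + d - j) := htail j (by omega) (by omega)
      rw [this, sub_self, mul_zero]
    · intro h
      simp at h
  -- eventual periodicity
  have hper : ∀ k, b (n1 + k) = b (n1 + k + p) := by
    intro k
    induction k using Nat.strong_induction_on with
    | _ k ih =>
      by_cases hk : k < d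
      · exact hinit k hk
      · have hkd : d ≤ k := by omega
        have hn : f.natDegree < n1 + k - d := by omega
        have := hstep (n1 + k - d) hn ?_
        · have heq1 : n1 + k - d + d = n1 + k := by omega
          have heq2 : n1 + k - d + p + d = n1 + k + p := by omega
          rwa [heq1, heq2] at this
        · intro i hi1 hid
          have heq1 : n1 + k - d + d - i = n1 + (k - i) := by omega
          have heq2 : n1 + k - d + p + d - i = n1 + (k - i) + p := by omega
          rw [heq1, heq2]
          exact ih (k - i) (by omega)
  have hper2 : ∀ k m, b (n1 + k) = b (n1 + k + m * p) := by
    intro k m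
    induction m with
    | zero => simp
    | succ m ih =>
      have hstep1 := hper (k + m * p)
      have heq1 : n1 + (k + m * p) = n1 + k + m * p := by ring
      rw [heq1] at hstep1
      rw [ih, hstep1]
      congr 1
      ring
  -- choose a long zero run past n1 covering one full period
  set j := p + n1 with hjdef
  have hjbig : p + n1 < 2 ^ (j + 2) := by
    calc p + n1 < 2 ^ (p + n1) := Nat.lt_two_pow_self
    _ ≤ 2 ^ (j + 2) := Nat.pow_le_pow_right (by norm_num) (by omega)
  set t := 5 * 2 ^ (j+2) with htdef
  have htn1 : n1 ≤ t := by omega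
  have hzero_tail : ∀ k, b (t + k) = 0 := by
    intro k
    obtain ⟨m, r, hrp, hk⟩ : ∃ m r, r < p ∧ k = m * p + r :=
      ⟨k / p, k % p, Nat.mod_lt _ (by omega), by
        rw [Nat.mul_comm]; exact (Nat.div_add_mod k p).symm⟩
    have key := hper2 (t + r - n1) m
    set q := m * p with hq
    have e1 : n1 + (t + r - n1) = t + r := by omega
    rw [e1] at key
    have e2 : t + r + q = t + k := by omega
    rw [e2] at key
    rw [← key]
    apply hz j
    · omega
    · omega
  -- contradiction with ones at powers of 4
  have hbig : t ≤ 4 ^ t := by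
    calc t ≤ 2 ^ t := (Nat.lt_two_pow_self (n := t)).le
    _ ≤ 4 ^ t := Nat.pow_le_pow_left (by norm_num) _
  have := hzero_tail (4 ^ t - t)
  rw [show t + (4 ^ t - t) = 4 ^ t by omega, hone t] at this
  exact one_ne_zero this
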